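/- With the setup of the weight-estimate lemma — r a positive even integer, D a finite nonempty index set, and for each p ∈ D: a positive integer ℓ(p) ≤ r, positive integers m_{p,1}, …, m_{p,ℓ(p)} with ∑_i m_{p,i} = r and m_{p,i} = m_{p,ℓ(p)+1−i}, reals 0 ≤ α_{p,1} < ⋯ < α_{p,ℓ(p)} < 1 with α_{p,i} = 1 − α_{p,ℓ(p)+1−i}, a positive integer r' < r, subsets I'(p) ⊆ {1,…,ℓ(p)} and positive integers m'_{p,j} ≤ m_{p,j} (j ∈ I'(p)) with ∑_{j∈I'(p)} m'_{p,j} = r' for each p — suppose additionally that there exist some p ∈ D and some j ∈ I'(p) with α_{p,j} > α_{p,1}. Then (1/r)·∑_{p∈D} ∑_{i=1}^{ℓ(p)} m_{p,i} α_{p,i} − (1/r')·∑_{p∈D} ∑_{j∈I'(p)} m'_{p,j} α_{p,j} < ∑_{p∈D} (1/2 − α_{p,1}). -/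

import Mathlib

/-- The strict upper estimate (3.6) in the proof of Lemma 3.6(ii): if moreover some
`j ∈ I'(p)` has `α_{p,j} > α_{p,1}`, then
`(1/r)·∑∑ m α − (1/r')·∑∑ m' α < ∑ (1/2 − α_{p,1})`. -/
theorem stmt_2 (r : ℕ) (hr : 0 < r) (hre : Even r)
    (D : Type) [Fintype D] [Nonempty D]
    (ℓ : D → ℕ) (m : D → ℕ → ℕ) (α : D → ℕ → ℝ)
    (hℓ_pos : ∀ p, 0 < ℓ p) (hℓ_le : ∀ p, ℓ p ≤ r)
    (hm_pos : ∀ p, ∀ i ∈ Finset.Icc 1 (ℓ p), 0 < m p i)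
    (hm_sum : ∀ p, ∑ i ∈ Finset.Icc 1 (ℓ p), m p i = r)
    (hm_sym : ∀ p, ∀ i ∈ Finset.Icc 1 (ℓ p), m p i = m p (ℓ p + 1 - i))
    (hα0 : ∀ p, 0 ≤ α p 1)
    (hα1 : ∀ p, α p (ℓ p) < 1)
    (hα_mono : ∀ p, ∀ i ∈ Finset.Icc 1 (ℓ p), ∀ j ∈ Finset.Icc 1 (ℓ p),
      i < j → α p i < α p j)
    (hα_sym : ∀ p, ∀ i ∈ Finset.Icc 1 (ℓ p), α p i = 1 - α p (ℓ p + 1 - i))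
    (r' : ℕ) (hr' : 0 < r') (hr'r : r' < r)
    (I' : D → Finset ℕ) (hI' : ∀ p, I' p ⊆ Finset.Icc 1 (ℓ p))
    (m' : D → ℕ → ℕ)
    (hm'_pos : ∀ p, ∀ j ∈ I' p, 0 < m' p j)
    (hm'_le : ∀ p, ∀ j ∈ I' p, m' p j ≤ m p j)
    (hm'_sum : ∀ p, ∑ j ∈ I' p, m' p j = r')
    (hex : ∃ p, ∃ j ∈ I' p, α p 1 < α p j) :
    (1 / (r : ℝ)) * ∑ p : D, ∑ i ∈ Finset.Icc 1 (ℓ p), (m p i : ℝ) * α p i -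
        (1 / (r' : ℝ)) * ∑ p : D, ∑ j ∈ I' p, (m' p j : ℝ) * α p j <
      ∑ p : D, (1 / 2 - α p 1) := by
  have hrR : (0 : ℝ) < r := by exact_mod_cast hr
  have hr'R : (0 : ℝ) < r' := by exact_mod_cast hr'
  -- each inner full sum equals r/2
  have key : ∀ p, ∑ i ∈ Finset.Icc 1 (ℓ p), (m p i : ℝ) * α p i = (r : ℝ) / 2 := by
    intro p
    have h1 : ∑ i ∈ Finset.Icc 1 (ℓ p), (m p i : ℝ) * α p i
        = ∑ i ∈ Finset.Icc 1 (ℓ p),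
            (m p (ℓ p + 1 - i) : ℝ) * (1 - α p (ℓ p + 1 - i)) := by
      refine Finset.sum_congr rfl fun i hi => ?_
      rw [← hm_sym p i hi, hα_sym p i hi]
    have h2 : ∑ i ∈ Finset.Icc 1 (ℓ p),
          (m p (ℓ p + 1 - i) : ℝ) * (1 - α p (ℓ p + 1 - i))
        = ∑ i ∈ Finset.Icc 1 (ℓ p), (m p i : ℝ) * (1 - α p i) := by
      refine Finset.sum_nbij' (fun i => ℓ p + 1 - i) (fun i => ℓ p + 1 - i)
        (fun a ha => ?_) (fun a ha => ?_) (fun a ha => ?_) (fun a ha => ?_)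
        (fun a ha => ?_) <;> simp only [Finset.mem_Icc] at *
      · omega
      · omega
      · omega
      · omega
    have h3 : ∑ i ∈ Finset.Icc 1 (ℓ p), (m p i : ℝ) * (1 - α p i)
        = (r : ℝ) - ∑ i ∈ Finset.Icc 1 (ℓ p), (m p i : ℝ) * α p i := by
      have hms : ∑ i ∈ Finset.Icc 1 (ℓ p), (m p i : ℝ) = (r : ℝ) := by
        exact_mod_cast congrArg (Nat.cast : ℕ → ℝ) (hm_sum p)
      rw [← hms, ← Finset.sum_sub_distrib]
      exact Finset.sum_congr rfl fun i hi => by ring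
    have := h1.trans (h2.trans h3)
    linarith
  -- α p j ≥ α p 1 for j ∈ I' p
  have hαge : ∀ p, ∀ j ∈ I' p, α p 1 ≤ α p j := by
    intro p j hj
    have hj' := hI' p hj
    simp only [Finset.mem_Icc] at hj'
    rcases eq_or_lt_of_le hj'.1 with h | h
    · rw [← h]
    · exact le_of_lt (hα_mono p 1 (Finset.mem_Icc.mpr ⟨le_refl 1, hℓ_pos p⟩) j
        (Finset.mem_Icc.mpr hj') h)
  have hlow : ∀ p, (r' : ℝ) * α p 1 ≤ ∑ j ∈ I' p, (m' p j : ℝ) * α p j := by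
    intro p
    have hms : ∑ j ∈ I' p, (m' p j : ℝ) = (r' : ℝ) := by
      exact_mod_cast congrArg (Nat.cast : ℕ → ℝ) (hm'_sum p)
    calc (r' : ℝ) * α p 1 = ∑ j ∈ I' p, (m' p j : ℝ) * α p 1 := by
          rw [← Finset.sum_mul, hms]
      _ ≤ ∑ j ∈ I' p, (m' p j : ℝ) * α p j :=
          Finset.sum_le_sum fun j hj =>
            mul_le_mul_of_nonneg_left (hαge p j hj) (by positivity)
  obtain ⟨p0, j0, hj0, hαj0⟩ := hex
  have hstrict : (r' : ℝ) * α p0 1 < ∑ j ∈ I' p0, (m' p0 j : ℝ) * α p0 j := by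
    have hms : ∑ j ∈ I' p0, (m' p0 j : ℝ) = (r' : ℝ) := by
      exact_mod_cast congrArg (Nat.cast : ℕ → ℝ) (hm'_sum p0)
    calc (r' : ℝ) * α p0 1 = ∑ j ∈ I' p0, (m' p0 j : ℝ) * α p0 1 := by
          rw [← Finset.sum_mul, hms]
      _ < ∑ j ∈ I' p0, (m' p0 j : ℝ) * α p0 j := by
          refine Finset.sum_lt_sum (fun j hj =>
            mul_le_mul_of_nonneg_left (hαge p0 j hj) (by positivity)) ⟨j0, hj0, ?_⟩
          have : (0 : ℝ) < (m' p0 j0 : ℝ) := by exact_mod_cast hm'_pos p0 j0 hj0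
          exact mul_lt_mul_of_pos_left hαj0 this
  have hT : (r' : ℝ) * ∑ p : D, α p 1
      < ∑ p : D, ∑ j ∈ I' p, (m' p j : ℝ) * α p j := by
    rw [Finset.mul_sum]
    exact Finset.sum_lt_sum (fun p _ => hlow p) ⟨p0, Finset.mem_univ p0, hstrict⟩
  have hfirst : (1 / (r : ℝ)) * ∑ p : D, ∑ i ∈ Finset.Icc 1 (ℓ p), (m p i : ℝ) * α p i
      = ∑ p : D, (1 / 2 : ℝ) := by
    rw [Finset.sum_congr rfl fun p _ => key p, Finset.sum_const, Finset.sum_const]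
    field_simp
    rw [nsmul_eq_mul, nsmul_eq_mul]; ring
  rw [Finset.sum_sub_distrib, ← hfirst]
  have h2 : ∑ p : D, α p 1 < (1 / (r' : ℝ)) * ∑ p : D, ∑ j ∈ I' p, (m' p j : ℝ) * α p j := by
    rw [one_div, ← div_eq_inv_mul, lt_div_iff₀ hr'R]
    linarith [hT]
  linarith
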